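/- (Cost-function leakage is bounded by the maximal inverse information density.) Let y ∈ 𝒴 with P_Y(y) > 0. For every finite nonempty set 𝒲 and every cost function c : 𝒳 × 𝒲 → ℝ≥0, ( min_{x∈𝒳} P_{X|Y=y}(x)/P_X(x) ) · min_{w∈𝒲} ∑_x c(x,w)·P_X(x) ≤ min_{w∈𝒲} ∑_x c(x,w)·P_{X|Y=y}(x). -/

import Mathlib

open Finset Real

/-- Cost-function leakage is bounded by the maximal inverse information density:
`(min_x P_{X|Y=y}(x)/P_X(x)) · min_w E[c(X,w)] ≤ min_w E[c(X,w) | Y=y]`. -/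
theorem stmt_15 {𝒳 𝒴 : Type} [Fintype 𝒳] [Nonempty 𝒳] [Fintype 𝒴] [Nonempty 𝒴]
    (PX : 𝒳 → ℝ) (hPXpos : ∀ x, 0 < PX x) (hPXsum : ∑ x, PX x = 1)
    (K : 𝒳 → 𝒴 → ℝ) (hKnn : ∀ x y, 0 ≤ K x y) (hKsum : ∀ x, ∑ y, K x y = 1)
    (y : 𝒴) (hPY : 0 < ∑ x, PX x * K x y)
    (𝒲 : Type) [Fintype 𝒲] [Nonempty 𝒲]
    (c : 𝒳 → 𝒲 → ℝ) (hcnn : ∀ x w, 0 ≤ c x w) :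
    Finset.univ.inf' Finset.univ_nonempty
        (fun x => (PX x * K x y / (∑ x', PX x' * K x' y)) / PX x) *
      Finset.univ.inf' Finset.univ_nonempty (fun w => ∑ x, c x w * PX x) ≤
    Finset.univ.inf' Finset.univ_nonempty
      (fun w => ∑ x, c x w * (PX x * K x y / (∑ x', PX x' * K x' y))) := by
  set S := ∑ x', PX x' * K x' y with hS
  set r : 𝒳 → ℝ := fun x => (PX x * K x y / S) / PX x with hr
  set m := Finset.univ.inf' Finset.univ_nonempty r with hm
  have hrnn : ∀ x, 0 ≤ r x := fun x =>
    div_nonneg (div_nonneg (mul_nonneg (hPXpos x).le (hKnn x y)) hPY.le) (hPXpos x).le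
  have hmnn : 0 ≤ m := by
    obtain ⟨x0, _, hx0⟩ := Finset.exists_mem_eq_inf' Finset.univ_nonempty r
    rw [hm, hx0]; exact hrnn x0
  obtain ⟨w0, _, hw0⟩ := Finset.exists_mem_eq_inf' (Finset.univ_nonempty (α := 𝒲))
    (fun w => ∑ x, c x w * (PX x * K x y / S))
  rw [hw0]
  calc m * Finset.univ.inf' Finset.univ_nonempty (fun w => ∑ x, c x w * PX x)
      ≤ m * ∑ x, c x w0 * PX x := by
        exact mul_le_mul_of_nonneg_left
          (Finset.inf'_le (fun w => ∑ x, c x w * PX x) (Finset.mem_univ w0)) hmnn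
    _ = ∑ x, m * (c x w0 * PX x) := by rw [Finset.mul_sum]
    _ ≤ ∑ x, c x w0 * (PX x * K x y / S) := by
        apply Finset.sum_le_sum
        intro x _
        have hmr : m ≤ r x := Finset.inf'_le r (Finset.mem_univ x)
        have : PX x * K x y / S = r x * PX x := by
          simp only [hr]; rw [div_mul_cancel₀ _ (hPXpos x).ne']
        rw [this]
        calc m * (c x w0 * PX x) ≤ r x * (c x w0 * PX x) :=
              mul_le_mul_of_nonneg_right hmr
                (mul_nonneg (hcnn x w0) (hPXpos x).le)
          _ = c x w0 * (r x * PX x) := by ring
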